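/- Let k be a field of characteristic zero and i, j ≥ 1. Let P_{i,j} be the 'nested horizontal diamonds' poset with underlying set {s_1, …, s_i, u, v, t_1, …, t_j} and order relations s_p < u, s_p < v, u < t_q, v < t_q for all p ≤ i, q ≤ j, where u and v are incomparable, the s_p are pairwise incomparable, and the t_q are pairwise incomparable. Then the incidence R-ring k^a[P_{i,j}] is Koszul. -/

import Mathlib

noncomputable section
open MulOpposite
open scoped DirectSum

namespace P1605

--CHUNK_G_BEGIN
section GradedRings

variable (R : Type) [Ring R]

/-- A connected graded `R`-ring: a ring `A` together with an `ℕ`-grading by additive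
subgroups whose degree-zero part is a copy of `R` (via `emb`), with the multiplicative
grading property.  The (unique) augmentation `A → R` is part of the data. -/
structure GRing (A : Type) [Ring A] where
  emb : R →+* A
  aug : A →+* R
  deg : ℕ → AddSubgroup A
  internal : DirectSum.IsInternal deg
  emb_mem : ∀ r : R, emb r ∈ deg 0
  emb_surj : ∀ x ∈ deg 0, ∃ r : R, emb r = x
  emb_inj : Function.Injective emb
  mul_mem : ∀ {p q : ℕ} {x y : A}, x ∈ deg p → y ∈ deg q → x * y ∈ deg (p + q)
  aug_emb : ∀ r : R, aug (emb r) = r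
  aug_deg : ∀ (n : ℕ), ∀ x ∈ deg (n + 1), aug x = 0

variable {R}

/-- A connected graded ring is strongly graded when every multiplication map
`A_p ⊗ A_q → A_{p+q}` is surjective, i.e. each element of `A_{p+q}` is a sum of
products of elements of degrees `p` and `q`. -/
def GRing.StronglyGraded {A : Type} [Ring A] (G : GRing R A) : Prop :=
  ∀ p q : ℕ, ∀ z ∈ G.deg (p + q),
    z ∈ AddSubgroup.closure {w : A | ∃ x ∈ G.deg p, ∃ y ∈ G.deg q, w = x * y}

/-- A grading, compatible with a graded ring `G`, on an `A`-module `M`. -/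
structure GMod {A : Type} [Ring A] (G : GRing R A) (M : Type) [AddCommGroup M]
    [Module A M] where
  deg : ℕ → AddSubgroup M
  internal : DirectSum.IsInternal deg
  smul_mem : ∀ {p d : ℕ} {a : A} {x : M}, a ∈ G.deg p → x ∈ deg d → a • x ∈ deg (p + d)

/-- A resolution of `R` by projective graded left `A`-modules, in which the `n`-th
module is generated by its homogeneous component of degree `n`.  Existence of such a
resolution is the definition of Koszulity. -/
structure KResolution {A : Type} [Ring A] (G : GRing R A) where
  P : ℕ → Type
  [acg : ∀ n, AddCommGroup (P n)]
  [mod : ∀ n, Module A (P n)]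
  proj : ∀ n, Module.Projective A (P n)
  g : ∀ n, ℕ → AddSubgroup (P n)
  internal : ∀ n, DirectSum.IsInternal (g n)
  smul_mem : ∀ (n : ℕ) {p d : ℕ} {a : A} {x : P n},
    a ∈ G.deg p → x ∈ g n d → a • x ∈ g n (p + d)
  f : ∀ n, P (n + 1) →+ P n
  f_linear : ∀ (n : ℕ) (a : A) (x : P (n + 1)), f n (a • x) = a • f n x
  f_graded : ∀ (n d : ℕ), ∀ x ∈ g (n + 1) d, f n x ∈ g n d
  eps : P 0 →+ R
  eps_linear : ∀ (a : A) (x : P 0), eps (a • x) = G.aug a * eps x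
  eps_surj : Function.Surjective eps
  eps_graded : ∀ (d : ℕ), ∀ x ∈ g 0 (d + 1), eps x = 0
  comp0 : ∀ x : P 1, eps (f 0 x) = 0
  exact0 : ∀ x : P 0, eps x = 0 → x ∈ Set.range (f 0)
  comp : ∀ (n : ℕ) (x : P (n + 2)), f n (f (n + 1) x) = 0
  exact : ∀ (n : ℕ) (x : P (n + 1)), f n x = 0 → x ∈ Set.range (f (n + 1))
  gen : ∀ (n : ℕ) (x : P n),
    x ∈ AddSubgroup.closure {z : P n | ∃ (a : A), ∃ y ∈ g n n, z = a • y}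

/-- A connected graded `R`-ring is Koszul if `R` admits a resolution by projective
graded left `A`-modules such that the `n`-th module is generated in degree `n`. -/
def GRing.IsKoszul {A : Type} [Ring A] (G : GRing R A) : Prop :=
  Nonempty (KResolution G)

end GradedRings
--CHUNK_G_END

--CHUNK_P_BEGIN
section Posets

variable (k : Type) [Field k] (P : Type) [PartialOrder P]

/-- `ρ` is a length function for the graded poset `P`: every interval `[x, y]`
contains a maximal chain (a saturated chain for the covering relation `⋖`), and
every maximal chain from `x` to `y` has the same length `ρ x y`. -/
structure LengthFn {P : Type} [PartialOrder P] (ρ : P → P → ℕ) : Prop where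
  exists_chain : ∀ x y : P, x ≤ y → ∃ c : List P,
    c.Chain' (· ⋖ ·) ∧ c.head? = some x ∧ c.getLast? = some y
  chain_length : ∀ (x y : P) (c : List P),
    c.Chain' (· ⋖ ·) → c.head? = some x → c.getLast? = some y →
    c.length = ρ x y + 1

/-- `A`, together with the family `e`, is (a copy of) the incidence algebra of the
finite poset `P` over the field `k`: the elements `e x y`, for `x ≤ y`, form a
`k`-basis of `A` and multiply by `e x y * e z w = δ_{y z} · e x w`; the identity
is `∑ₓ e x x`. -/
structure IncAlg [Fintype P] [DecidableEq P] (A : Type) [Ring A] [Algebra k A] where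
  e : P → P → A
  e_not_le : ∀ x y : P, ¬ x ≤ y → e x y = 0
  e_mul : ∀ x y z w : P, x ≤ y → z ≤ w →
    e x y * e z w = if y = z then e x w else 0
  indep : LinearIndependent k (fun p : {p : P × P // p.1 ≤ p.2} => e p.1.1 p.1.2)
  span_top : Submodule.span k
    (Set.range (fun p : {p : P × P // p.1 ≤ p.2} => e p.1.1 p.1.2)) = ⊤
  one_def : (1 : A) = ∑ x : P, e x x

variable {k P}

/-- The canonical structure of connected graded `R`-ring (`R = k^P`) on the
incidence algebra of a finite graded poset: `e x y` is homogeneous of degree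
`l([x,y]) = ρ x y`, the degree-zero part is `R` embedded diagonally, and the
augmentation kills all `e x y` with `x ≠ y`. -/
structure IncGrading [Fintype P] [DecidableEq P] {A : Type} [Ring A] [Algebra k A]
    (inc : IncAlg k P A) (ρ : P → P → ℕ) (G : GRing (P → k) A) : Prop where
  emb_eq : ∀ f : P → k, G.emb f = ∑ x : P, f x • inc.e x x
  deg_eq : ∀ d : ℕ, (G.deg d : Set A) =
    ↑(Submodule.span k {a : A | ∃ x y : P, x ≤ y ∧ ρ x y = d ∧ a = inc.e x y})
  aug_eq : ∀ x y : P, x ≤ y →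
    G.aug (inc.e x y) = if x = y then Pi.single x (1 : k) else 0

end Posets
--CHUNK_P_END


/-- The "nested horizontal diamonds" poset on `{s_1, …, s_i, u, v, t_1, …, t_j}`
with `s_p < u`, `s_p < v`, `u < t_q`, `v < t_q`, where `u` and `v` are
incomparable, the `s_p` pairwise incomparable and the `t_q` pairwise incomparable. -/
inductive HD (i j : ℕ) : Type
  | s (p : Fin i) | u | v | t (q : Fin j)
deriving DecidableEq, Fintype

namespace HD

variable {i j : ℕ}

/-- The order relation of the nested horizontal diamonds poset. -/
def le : HD i j → HD i j → Prop
  | .s p, .s p' => p = p'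
  | .s _, .u => True
  | .s _, .v => True
  | .s _, .t _ => True
  | .u, .u => True
  | .u, .t _ => True
  | .v, .v => True
  | .v, .t _ => True
  | .t q, .t q' => q = q'
  | _, _ => False

instance : PartialOrder (HD i j) where
  le := le
  le_refl a := by cases a <;> simp [le]
  le_trans a b c hab hbc := by
    cases a <;> cases b <;> cases c <;> simp_all [le]
  le_antisymm a b hab hba := by
    cases a <;> cases b <;> simp_all [le]

end HD

section OrderLemmas

variable {i j : ℕ}

lemma hd_le_iff (x y : HD i j) : x ≤ y ↔ HD.le x y := Iff.rfl

@[simp] lemma le_su (p : Fin i) : (HD.s p : HD i j) ≤ HD.u := trivial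
@[simp] lemma le_sv (p : Fin i) : (HD.s p : HD i j) ≤ HD.v := trivial
@[simp] lemma le_ut (q : Fin j) : (HD.u : HD i j) ≤ HD.t q := trivial
@[simp] lemma le_vt (q : Fin j) : (HD.v : HD i j) ≤ HD.t q := trivial
@[simp] lemma le_st (p : Fin i) (q : Fin j) : (HD.s p : HD i j) ≤ HD.t q := trivial

lemma le_of_le_s {z : HD i j} {p : Fin i} (h : z ≤ HD.s p) : z = HD.s p := by
  cases z with
  | s p' => rw [hd_le_iff] at h; simp [HD.le] at h; rw [h]
  | u => exact absurd h (by rw [hd_le_iff]; simp [HD.le])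
  | v => exact absurd h (by rw [hd_le_iff]; simp [HD.le])
  | t q => exact absurd h (by rw [hd_le_iff]; simp [HD.le])

lemma le_of_le_u {z : HD i j} (h : z ≤ HD.u) : z = HD.u ∨ ∃ p, z = HD.s p := by
  cases z with
  | s p' => exact Or.inr ⟨p', rfl⟩
  | u => exact Or.inl rfl
  | v => exact absurd h (by rw [hd_le_iff]; simp [HD.le])
  | t q => exact absurd h (by rw [hd_le_iff]; simp [HD.le])

lemma le_of_le_v {z : HD i j} (h : z ≤ HD.v) : z = HD.v ∨ ∃ p, z = HD.s p := by
  cases z with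
  | s p' => exact Or.inr ⟨p', rfl⟩
  | v => exact Or.inl rfl
  | u => exact absurd h (by rw [hd_le_iff]; simp [HD.le])
  | t q => exact absurd h (by rw [hd_le_iff]; simp [HD.le])

lemma le_of_u_le {z : HD i j} (h : HD.u ≤ z) : z = HD.u ∨ ∃ q, z = HD.t q := by
  cases z with
  | s p' => exact absurd h (by rw [hd_le_iff]; simp [HD.le])
  | u => exact Or.inl rfl
  | v => exact absurd h (by rw [hd_le_iff]; simp [HD.le])
  | t q => exact Or.inr ⟨q, rfl⟩

lemma le_of_v_le {z : HD i j} (h : HD.v ≤ z) : z = HD.v ∨ ∃ q, z = HD.t q := by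
  cases z with
  | s p' => exact absurd h (by rw [hd_le_iff]; simp [HD.le])
  | v => exact Or.inl rfl
  | u => exact absurd h (by rw [hd_le_iff]; simp [HD.le])
  | t q => exact Or.inr ⟨q, rfl⟩

lemma s_le_s {p p' : Fin i} (h : (HD.s p : HD i j) ≤ HD.s p') : p = p' := h

lemma t_le_t {q q' : Fin j} (h : (HD.t q : HD i j) ≤ HD.t q') : q = q' := h

lemma cov_su (p : Fin i) : (HD.s p : HD i j) ⋖ HD.u := by
  constructor
  · exact lt_of_le_of_ne (le_su p) (by simp)
  · intro c h1 h2
    rcases le_of_le_u h2.le with rfl | ⟨p', rfl⟩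
    · exact lt_irrefl _ h2
    · exact h1.ne' (le_of_le_s h1.le).symm

lemma cov_sv (p : Fin i) : (HD.s p : HD i j) ⋖ HD.v := by
  constructor
  · exact lt_of_le_of_ne (le_sv p) (by simp)
  · intro c h1 h2
    rcases le_of_le_v h2.le with rfl | ⟨p', rfl⟩
    · exact lt_irrefl _ h2
    · exact h1.ne' (le_of_le_s h1.le).symm

lemma cov_ut (q : Fin j) : (HD.u : HD i j) ⋖ HD.t q := by
  constructor
  · exact lt_of_le_of_ne (le_ut q) (by simp)
  · intro c h1 h2
    rcases le_of_u_le h1.le with rfl | ⟨q', rfl⟩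
    · exact lt_irrefl _ h1
    · exact h2.ne (congrArg HD.t (t_le_t h2.le)) 

lemma cov_vt (q : Fin j) : (HD.v : HD i j) ⋖ HD.t q := by
  constructor
  · exact lt_of_le_of_ne (le_vt q) (by simp)
  · intro c h1 h2
    rcases le_of_v_le h1.le with rfl | ⟨q', rfl⟩
    · exact lt_irrefl _ h1
    · exact h2.ne (congrArg HD.t (t_le_t h2.le))

variable {ρ : HD i j → HD i j → ℕ} (hρ : LengthFn ρ)

include hρ

lemma rho_refl (x : HD i j) : ρ x x = 0 := by
  have h := hρ.chain_length x x [x] (List.isChain_singleton x) rfl rfl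
  simpa using h.symm

lemma rho_cov {x y : HD i j} (h : x ⋖ y) : ρ x y = 1 := by
  have h2 := hρ.chain_length x y [x, y] (List.isChain_pair.mpr h) rfl rfl
  simpa using h2.symm

lemma rho_st (p : Fin i) (q : Fin j) : ρ (HD.s p) (HD.t q) = 2 := by
  have h := hρ.chain_length (HD.s p) (HD.t q) [HD.s p, HD.u, HD.t q]
    (by exact List.isChain_cons_cons.mpr ⟨cov_su p, List.isChain_pair.mpr (cov_ut q)⟩) rfl rfl
  simpa using h.symm

lemma rho_le_two {x y : HD i j} (h : x ≤ y) : ρ x y ≤ 2 := by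
  cases x with
  | s p =>
    cases y with
    | s p' => rcases s_le_s h; simp [rho_refl hρ]
    | u => simp [rho_cov hρ (cov_su p)]
    | v => simp [rho_cov hρ (cov_sv p)]
    | t q => simp [rho_st hρ]
  | u =>
    rcases le_of_u_le h with rfl | ⟨q, rfl⟩
    · simp [rho_refl hρ]
    · simp [rho_cov hρ (cov_ut q)]
  | v =>
    rcases le_of_v_le h with rfl | ⟨q, rfl⟩
    · simp [rho_refl hρ]
    · simp [rho_cov hρ (cov_vt q)]
  | t q =>
    cases y with
    | t q' => rcases t_le_t h; simp [rho_refl hρ]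
    | s p' => exact absurd h (by rw [hd_le_iff]; simp [HD.le])
    | u => exact absurd h (by rw [hd_le_iff]; simp [HD.le])
    | v => exact absurd h (by rw [hd_le_iff]; simp [HD.le])

lemma rho_zero_eq {x y : HD i j} (h : x ≤ y) (h0 : ρ x y = 0) : x = y := by
  obtain ⟨c, hc, hh, hl⟩ := hρ.exists_chain x y h
  have hlen := hρ.chain_length x y c hc hh hl
  rw [h0] at hlen
  obtain ⟨a, rfl⟩ := List.length_eq_one_iff.mp hlen
  simp at hh hl
  rw [← hh, ← hl]

end OrderLemmas


section Alg

variable {k : Type} [Field k] {i j : ℕ} {A : Type} [Ring A] [Algebra k A]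

/-- The type indexing the basis of the incidence algebra. -/
abbrev Pair (i j : ℕ) := {p : HD i j × HD i j // p.1 ≤ p.2}

variable [Fintype (HD i j)] [DecidableEq (HD i j)] (inc : IncAlg k (HD i j) A)

def bA : Module.Basis (Pair i j) k A := Module.Basis.mk inc.indep (le_of_eq inc.span_top.symm)

@[simp] lemma bA_apply (p : Pair i j) : bA inc p = inc.e p.1.1 p.1.2 := Module.Basis.mk_apply _ _ _

def co (p : Pair i j) : A →ₗ[k] k := (bA inc).coord p

lemma co_e {z w : HD i j} (h : z ≤ w) (p : Pair i j) :
    co inc p (inc.e z w) = if (⟨(z, w), h⟩ : Pair i j) = p then 1 else 0 := by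
  have : inc.e z w = bA inc ⟨(z, w), h⟩ := (bA_apply inc ⟨(z, w), h⟩).symm
  rw [this]
  simp only [co, Module.Basis.coord_apply, Module.Basis.repr_self]
  exact Finsupp.single_apply

lemma e_comp {x y z : HD i j} (h1 : x ≤ y) (h2 : y ≤ z) :
    inc.e x y * inc.e y z = inc.e x z := by
  rw [inc.e_mul x y y z h1 h2, if_pos rfl]

lemma e_noncomp {x y z w : HD i j} (h1 : x ≤ y) (h2 : z ≤ w) (h : y ≠ z) :
    inc.e x y * inc.e z w = 0 := by
  rw [inc.e_mul x y z w h1 h2, if_neg h]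

lemma e_idem (x : HD i j) : inc.e x x * inc.e x x = inc.e x x :=
  e_comp inc le_rfl le_rfl

/-- Edges of the Hasse diagram. -/
abbrev Eg (i j : ℕ) := (Fin i ⊕ Fin i) ⊕ (Fin j ⊕ Fin j)

def src : Eg i j → HD i j
  | .inl (.inl p) => .s p
  | .inl (.inr p) => .s p
  | .inr (.inl _) => .u
  | .inr (.inr _) => .v

def tgt : Eg i j → HD i j
  | .inl (.inl _) => .u
  | .inl (.inr _) => .v
  | .inr (.inl q) => .t q
  | .inr (.inr q) => .t q

lemma src_le_tgt (e : Eg i j) : src e ≤ tgt e := by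
  rcases e with (p | p) | (q | q) <;> simp [src, tgt]

def P1 : Submodule A (Eg i j → A) where
  carrier := {f | ∀ e, f e * inc.e (src e) (src e) = f e}
  add_mem' := by intro f g hf hg e; rw [Pi.add_apply, add_mul, hf e, hg e]
  zero_mem' := by intro e; rw [Pi.zero_apply, zero_mul]
  smul_mem' := by intro a f hf e; rw [Pi.smul_apply, smul_eq_mul, mul_assoc, hf e]

def P2 : Submodule A (Fin i × Fin j → A) where
  carrier := {f | ∀ pq, f pq * inc.e (HD.s pq.1) (HD.s pq.1) = f pq}
  add_mem' := by intro f g hf hg e; rw [Pi.add_apply, add_mul, hf e, hg e]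
  zero_mem' := by intro e; rw [Pi.zero_apply, zero_mul]
  smul_mem' := by intro a f hf e; rw [Pi.smul_apply, smul_eq_mul, mul_assoc, hf e]

def F0 : (Eg i j → A) → A := fun f => ∑ e : Eg i j, f e * inc.e (src e) (tgt e)

def F1 : (Fin i × Fin j → A) → Eg i j → A := fun g e =>
  match e with
  | .inr (.inl q) => ∑ p, g (p, q) * inc.e (HD.s p) HD.u
  | .inr (.inr q) => -∑ p, g (p, q) * inc.e (HD.s p) HD.v
  | _ => 0

def H0 : A → Eg i j → A := fun b e =>
  match e with
  | .inl (.inl p) => co inc ⟨(HD.s p, HD.u), le_su p⟩ b • inc.e (HD.s p) (HD.s p)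
  | .inl (.inr p) => co inc ⟨(HD.s p, HD.v), le_sv p⟩ b • inc.e (HD.s p) (HD.s p)
  | .inr (.inl q) => co inc ⟨(HD.u, HD.t q), le_ut q⟩ b • inc.e HD.u HD.u
      + ∑ p, co inc ⟨(HD.s p, HD.t q), le_st p q⟩ b • inc.e (HD.s p) HD.u
  | .inr (.inr q) => co inc ⟨(HD.v, HD.t q), le_vt q⟩ b • inc.e HD.v HD.v

def H1 : (Eg i j → A) → Fin i × Fin j → A := fun x pq =>
  -(co inc ⟨(HD.s pq.1, HD.v), le_sv _⟩ (x (.inr (.inr pq.2)))) • inc.e (HD.s pq.1) (HD.s pq.1)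

-- linearity lemmas
lemma F0_add (f g : Eg i j → A) : F0 inc (f + g) = F0 inc f + F0 inc g := by
  simp [F0, add_mul, Finset.sum_add_distrib]

lemma F0_zero : F0 inc (0 : Eg i j → A) = 0 := by simp [F0]

lemma F0_smul (a : A) (f : Eg i j → A) : F0 inc (a • f) = a * F0 inc f := by
  simp [F0, Finset.mul_sum, mul_add, mul_assoc]

lemma F0_smulk (c : k) (f : Eg i j → A) : F0 inc (c • f) = c • F0 inc f := by
  simp [F0, Finset.smul_sum, smul_mul_assoc]

lemma F1_add (f g : Fin i × Fin j → A) : F1 inc (f + g) = F1 inc f + F1 inc g := by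
  funext e
  rcases e with (p | p) | (q | q) <;>
    simp [F1, add_mul, Finset.sum_add_distrib, neg_add, add_comm]

lemma F1_zero : F1 inc (0 : Fin i × Fin j → A) = 0 := by
  funext e
  rcases e with (p | p) | (q | q) <;> simp [F1]

lemma F1_smul (a : A) (f : Fin i × Fin j → A) : F1 inc (a • f) = a • F1 inc f := by
  funext e
  rcases e with (p | p) | (q | q) <;>
    simp [F1, Finset.mul_sum, mul_assoc]

lemma F1_smulk (c : k) (f : Fin i × Fin j → A) : F1 inc (c • f) = c • F1 inc f := by
  funext e
  rcases e with (p | p) | (q | q) <;>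
    simp [F1, Finset.smul_sum, smul_mul_assoc]

lemma F1_neg (f : Fin i × Fin j → A) : F1 inc (-f) = -F1 inc f := by
  have h : (-f : Fin i × Fin j → A) = (-1 : A) • f := by funext pq; simp
  rw [h, F1_smul, neg_one_smul]

lemma H0_add (a b : A) : H0 inc (a + b) = H0 inc a + H0 inc b := by
  funext e
  rcases e with (p | p) | (q | q) <;>
    simp [H0, map_add, add_smul, Finset.sum_add_distrib] <;> abel

lemma H0_zero : H0 inc (0 : A) = 0 := by
  funext e
  rcases e with (p | p) | (q | q) <;> simp [H0]

lemma H0_smulk (c : k) (a : A) : H0 inc (c • a) = c • H0 inc a := by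
  funext e
  rcases e with (p | p) | (q | q) <;>
    simp [H0, map_smul, smul_smul, Finset.smul_sum, smul_add]

lemma H1_add (f g : Eg i j → A) : H1 inc (f + g) = H1 inc f + H1 inc g := by
  funext pq
  simp [H1, map_add, add_smul, neg_add, add_comm]

lemma H1_zero : H1 inc (0 : Eg i j → A) = 0 := by
  funext pq; simp [H1]

lemma H1_smulk (c : k) (f : Eg i j → A) : H1 inc (c • f) = c • H1 inc f := by
  funext pq
  simp [H1, map_smul, smul_smul]

lemma repr_expand (b : A) :
    b = ∑ p ∈ ((bA inc).repr b).support, ((bA inc).repr b) p • bA inc p := by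
  conv_lhs => rw [← (bA inc).linearCombination_repr b]
  rw [Finsupp.linearCombination_apply, Finsupp.sum]

lemma mem_span_of_fix {x : HD i j} {b : A} (hb : b * inc.e x x = b) :
    b ∈ Submodule.span k {a : A | ∃ z, ∃ _ : z ≤ x, a = inc.e z x} := by
  rw [← hb, repr_expand inc b, Finset.sum_mul]
  apply Submodule.sum_mem
  intro p _
  rw [smul_mul_assoc, bA_apply, inc.e_mul _ _ _ _ p.2 le_rfl]
  by_cases h : p.1.2 = x
  · rw [if_pos h]
    apply Submodule.smul_mem
    apply Submodule.subset_span
    exact ⟨p.1.1, h ▸ p.2, rfl⟩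
  · rw [if_neg h, smul_zero]
    exact Submodule.zero_mem _

def T1 : Set (Eg i j → A) :=
  {g | ∃ (e : Eg i j) (z : HD i j) (_ : z ≤ src e), g = Pi.single e (inc.e z (src e))}

def T2 : Set (Fin i × Fin j → A) :=
  {g | ∃ pq : Fin i × Fin j, g = Pi.single pq (inc.e (HD.s pq.1) (HD.s pq.1))}

lemma memP1_span {x : Eg i j → A} (hx : x ∈ P1 inc) : x ∈ Submodule.span k (T1 inc) := by
  have : x = ∑ e : Eg i j, Pi.single e (x e) := (Finset.univ_sum_single x).symm
  rw [this]
  apply Submodule.sum_mem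
  intro e _
  have hxe : x e ∈ Submodule.span k {a : A | ∃ z, ∃ _ : z ≤ src e, a = inc.e z (src e)} :=
    mem_span_of_fix inc (hx e)
  refine Submodule.span_induction ?_ ?_ ?_ ?_ hxe
  · rintro a ⟨z, hz, rfl⟩
    exact Submodule.subset_span ⟨e, z, hz, rfl⟩
  · rw [Pi.single_zero]; exact Submodule.zero_mem _
  · intro a b _ _ ha hb
    rw [Pi.single_add]; exact Submodule.add_mem _ ha hb
  · intro c a _ ha
    rw [Pi.single_smul]; exact Submodule.smul_mem _ c ha

lemma memP2_span {x : Fin i × Fin j → A} (hx : x ∈ P2 inc) :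
    x ∈ Submodule.span k (T2 inc) := by
  have : x = ∑ pq : Fin i × Fin j, Pi.single pq (x pq) := (Finset.univ_sum_single x).symm
  rw [this]
  apply Submodule.sum_mem
  intro pq _
  have hxe : x pq ∈ Submodule.span k
      {a : A | ∃ z, ∃ _ : z ≤ HD.s pq.1, a = inc.e z (HD.s pq.1)} :=
    mem_span_of_fix inc (hx pq)
  refine Submodule.span_induction ?_ ?_ ?_ ?_ hxe
  · rintro a ⟨z, hz, rfl⟩
    rcases le_of_le_s hz
    exact Submodule.subset_span ⟨pq, rfl⟩
  · rw [Pi.single_zero]; exact Submodule.zero_mem _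
  · intro a b _ _ ha hb
    rw [Pi.single_add]; exact Submodule.add_mem _ ha hb
  · intro c a _ ha
    rw [Pi.single_smul]; exact Submodule.smul_mem _ c ha

lemma F0_single (e₀ : Eg i j) (a : A) :
    F0 inc (Pi.single e₀ a) = a * inc.e (src e₀) (tgt e₀) := by
  rw [F0, Finset.sum_eq_single e₀]
  · rw [Pi.single_eq_same]
  · intro e _ he
    rw [Pi.single_eq_of_ne he, zero_mul]
  · intro h; exact absurd (Finset.mem_univ _) h

lemma co_e_mk {z w a b : HD i j} (h : z ≤ w) (h' : a ≤ b) :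
    co inc ⟨(a, b), h'⟩ (inc.e z w) = if z = a ∧ w = b then 1 else 0 := by
  rw [co_e inc h]
  simp only [Subtype.mk_eq_mk, Prod.mk.injEq]

lemma H1_single_ne (e₀ : Eg i j) (a : A) (h : ∀ q, e₀ ≠ .inr (.inr q)) :
    H1 inc (Pi.single e₀ a) = 0 := by
  funext pq
  have hv : (Pi.single e₀ a : Eg i j → A) (Sum.inr (Sum.inr pq.2)) = 0 :=
    Pi.single_eq_of_ne (M := fun _ : Eg i j => A) (Ne.symm (h pq.2)) a
  simp [H1, hv]

lemma H0_e_su (p : Fin i) :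
    H0 inc (inc.e (HD.s p) HD.u) =
      Pi.single (Sum.inl (Sum.inl p) : Eg i j) (inc.e (HD.s p) (HD.s p)) := by
  funext e'
  rcases e' with (p' | p') | (q' | q')
  · by_cases h : p' = p
    · subst h; simp [H0, co_e_mk, Pi.single_apply]
    · simp [H0, co_e_mk, Pi.single_apply, h, Ne.symm h]
  · simp [H0, co_e_mk, Pi.single_apply]
  · simp [H0, co_e_mk, Pi.single_apply]
  · simp [H0, co_e_mk, Pi.single_apply]

lemma H0_e_sv (p : Fin i) :
    H0 inc (inc.e (HD.s p) HD.v) =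
      Pi.single (Sum.inl (Sum.inr p) : Eg i j) (inc.e (HD.s p) (HD.s p)) := by
  funext e'
  rcases e' with (p' | p') | (q' | q')
  · simp [H0, co_e_mk, Pi.single_apply]
  · by_cases h : p' = p
    · subst h; simp [H0, co_e_mk, Pi.single_apply]
    · simp [H0, co_e_mk, Pi.single_apply, h, Ne.symm h]
  · simp [H0, co_e_mk, Pi.single_apply]
  · simp [H0, co_e_mk, Pi.single_apply]

lemma H0_e_ut (q : Fin j) :
    H0 inc (inc.e HD.u (HD.t q)) =
      Pi.single (Sum.inr (Sum.inl q) : Eg i j) (inc.e HD.u HD.u) := by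
  funext e'
  rcases e' with (p' | p') | (q' | q')
  · simp [H0, co_e_mk, Pi.single_apply]
  · simp [H0, co_e_mk, Pi.single_apply]
  · by_cases h : q' = q
    · subst h; simp [H0, co_e_mk, Pi.single_apply]
    · simp [H0, co_e_mk, Pi.single_apply, h, Ne.symm h]
  · simp [H0, co_e_mk, Pi.single_apply]

lemma H0_e_vt (q : Fin j) :
    H0 inc (inc.e HD.v (HD.t q)) =
      Pi.single (Sum.inr (Sum.inr q) : Eg i j) (inc.e HD.v HD.v) := by
  funext e'
  rcases e' with (p' | p') | (q' | q')
  · simp [H0, co_e_mk, Pi.single_apply]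
  · simp [H0, co_e_mk, Pi.single_apply]
  · simp [H0, co_e_mk, Pi.single_apply]
  · by_cases h : q' = q
    · subst h; simp [H0, co_e_mk, Pi.single_apply]
    · simp [H0, co_e_mk, Pi.single_apply, h, Ne.symm h]

lemma H0_e_st (p : Fin i) (q : Fin j) :
    H0 inc (inc.e (HD.s p) (HD.t q)) =
      Pi.single (Sum.inr (Sum.inl q) : Eg i j) (inc.e (HD.s p) HD.u) := by
  funext e'
  rcases e' with (p' | p') | (q' | q')
  · simp [H0, co_e_mk, Pi.single_apply]
  · simp [H0, co_e_mk, Pi.single_apply]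
  · by_cases h : q' = q
    · subst h
      simp only [H0, co_e_mk, Pi.single_apply, le_st, le_ut]
      rw [Finset.sum_eq_single p]
      · simp
      · intro p' _ hp'
        simp [Ne.symm hp']
      · simp
    · simp only [H0, co_e_mk, Pi.single_apply, le_st, le_ut]
      have hq : ¬((HD.t q : HD i j) = HD.t q') := by simp [Ne.symm h]
      simp [hq, h, Ne.symm h]
  · simp [H0, co_e_mk, Pi.single_apply]

lemma F1_single (p : Fin i) (q : Fin j) (a : A) :
    F1 inc (Pi.single (p, q) a) =
      Pi.single (Sum.inr (Sum.inl q) : Eg i j) (a * inc.e (HD.s p) HD.u)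
        - Pi.single (Sum.inr (Sum.inr q) : Eg i j) (a * inc.e (HD.s p) HD.v) := by
  funext e'
  rcases e' with (p' | p') | (q' | q')
  · simp [F1, Pi.single_apply]
  · simp [F1, Pi.single_apply]
  · simp only [F1, Pi.sub_apply, Pi.single_apply]
    by_cases h : q' = q
    · subst h
      rw [Finset.sum_eq_single p]
      · simp
      · intro p' _ hp'
        rw [if_neg (by simp [Prod.ext_iff, hp']), zero_mul]
      · simp
    · simp [Prod.ext_iff, h]
  · simp only [F1, Pi.sub_apply, Pi.single_apply]
    by_cases h : q' = q
    · subst h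
      rw [Finset.sum_eq_single p]
      · simp
      · intro p' _ hp'
        rw [if_neg (by simp [Prod.ext_iff, hp']), zero_mul]
      · simp
    · simp [Prod.ext_iff, h]

lemma H1_single_vt_vv (q : Fin j) :
    H1 inc (Pi.single (Sum.inr (Sum.inr q) : Eg i j) (inc.e HD.v HD.v)) = 0 := by
  funext pq
  by_cases h : pq.2 = q
  · have hv : (Pi.single (Sum.inr (Sum.inr q) : Eg i j) (inc.e HD.v HD.v) : Eg i j → A)
        (Sum.inr (Sum.inr pq.2)) = inc.e HD.v HD.v := by
      rw [h]; exact Pi.single_eq_same _ _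
    simp [H1, hv, co_e_mk]
  · have hv : (Pi.single (Sum.inr (Sum.inr q) : Eg i j) (inc.e HD.v HD.v) : Eg i j → A)
        (Sum.inr (Sum.inr pq.2)) = 0 :=
      Pi.single_eq_of_ne (by simp [h]) _
    simp [H1, hv]

lemma H1_single_vt_sv (p : Fin i) (q : Fin j) :
    H1 inc (Pi.single (Sum.inr (Sum.inr q) : Eg i j) (inc.e (HD.s p) HD.v)) =
      -Pi.single (p, q) (inc.e (HD.s p) (HD.s p)) := by
  funext pq
  by_cases h : pq.2 = q
  · have hval : (Pi.single (Sum.inr (Sum.inr q) : Eg i j) (inc.e (HD.s p) HD.v) : Eg i j → A)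
        (Sum.inr (Sum.inr pq.2)) = inc.e (HD.s p) HD.v := by
      rw [h]; exact Pi.single_eq_same _ _
    by_cases hp : pq.1 = p
    · have hpq : pq = (p, q) := Prod.ext hp h
      subst hpq
      simp [H1, hval, co_e_mk, Pi.single_apply]
    · have hpq : pq ≠ (p, q) := by
        intro hc; exact hp (by rw [hc])
      simp [H1, hval, co_e_mk, Ne.symm hp, hpq, Pi.single_apply]
  · have hval : (Pi.single (Sum.inr (Sum.inr q) : Eg i j) (inc.e (HD.s p) HD.v) : Eg i j → A)
        (Sum.inr (Sum.inr pq.2)) = 0 :=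
      Pi.single_eq_of_ne (by simp [h]) _
    have hpq : pq ≠ (p, q) := by
      intro hc; exact h (by rw [hc])
    simp [H1, hval, hpq, Pi.single_apply]

lemma H1_F1_single (p : Fin i) (q : Fin j) :
    H1 inc (F1 inc (Pi.single (p, q) (inc.e (HD.s p) (HD.s p)))) =
      Pi.single (p, q) (inc.e (HD.s p) (HD.s p)) := by
  rw [F1_single, e_comp inc (le_refl (HD.s p)) (le_su p),
    e_comp inc (le_refl (HD.s p)) (le_sv p), sub_eq_add_neg]
  have hneg : -(Pi.single (Sum.inr (Sum.inr q) : Eg i j) (inc.e (HD.s p) HD.v) : Eg i j → A) =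
      (-1 : k) • (Pi.single (Sum.inr (Sum.inr q) : Eg i j) (inc.e (HD.s p) HD.v) : Eg i j → A) := by
    rw [neg_one_smul]
  rw [H1_add, hneg, H1_smulk, H1_single_vt_sv, H1_single_ne inc _ _ (by intro q'; simp)]
  simp

/-- The contracting homotopy identity on `P1`. -/
lemma homotopy1 {x : Eg i j → A} (hx : x ∈ P1 inc) :
    F1 inc (H1 inc x) + H0 inc (F0 inc x) = x := by
  have hx' := memP1_span inc hx
  refine Submodule.span_induction ?_ ?_ ?_ ?_ hx'
  · rintro g ⟨e, z, hz, rfl⟩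
    rcases e with (p | p) | (q | q)
    · rcases le_of_le_s hz
      rw [F0_single, H1_single_ne inc _ _ (by intro q'; simp), F1_zero, zero_add,
        show src (Sum.inl (Sum.inl p) : Eg i j) = HD.s p from rfl,
        show tgt (Sum.inl (Sum.inl p) : Eg i j) = HD.u from rfl,
        e_comp inc (le_refl (HD.s p)) (le_su p), H0_e_su]
    · rcases le_of_le_s hz
      rw [F0_single, H1_single_ne inc _ _ (by intro q'; simp), F1_zero, zero_add,
        show src (Sum.inl (Sum.inr p) : Eg i j) = HD.s p from rfl,
        show tgt (Sum.inl (Sum.inr p) : Eg i j) = HD.v from rfl,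
        e_comp inc (le_refl (HD.s p)) (le_sv p), H0_e_sv]
    · rw [F0_single, H1_single_ne inc _ _ (by intro q'; simp), F1_zero, zero_add,
        show src (Sum.inr (Sum.inl q) : Eg i j) = HD.u from rfl,
        show tgt (Sum.inr (Sum.inl q) : Eg i j) = HD.t q from rfl]
      rcases le_of_le_u hz with rfl | ⟨p, rfl⟩
      · rw [e_comp inc (le_refl HD.u) (le_ut q), H0_e_ut]
      · rw [e_comp inc (le_su p) (le_ut q), H0_e_st]
    · rw [F0_single,
        show src (Sum.inr (Sum.inr q) : Eg i j) = HD.v from rfl,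
        show tgt (Sum.inr (Sum.inr q) : Eg i j) = HD.t q from rfl]
      rcases le_of_le_v hz with rfl | ⟨p, rfl⟩
      · rw [e_comp inc (le_refl HD.v) (le_vt q), H0_e_vt, H1_single_vt_vv, F1_zero, zero_add]
      · rw [e_comp inc (le_sv p) (le_vt q), H0_e_st, H1_single_vt_sv]
        have hneg : -(Pi.single (p, q) (inc.e (HD.s p) (HD.s p)) : Fin i × Fin j → A) =
            (-1 : k) • (Pi.single (p, q) (inc.e (HD.s p) (HD.s p)) : Fin i × Fin j → A) := by
          rw [neg_one_smul]
        rw [hneg, F1_smulk, F1_single, e_comp inc (le_refl (HD.s p)) (le_su p),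
          e_comp inc (le_refl (HD.s p)) (le_sv p), neg_one_smul, neg_sub, sub_add_cancel]
  · simp [H1_zero, F1_zero, F0_zero, H0_zero]
  · intro a b _ _ ha hb
    rw [H1_add, F1_add, F0_add, H0_add,
      show F1 inc (H1 inc a) + F1 inc (H1 inc b) + (H0 inc (F0 inc a) + H0 inc (F0 inc b)) =
        F1 inc (H1 inc a) + H0 inc (F0 inc a) + (F1 inc (H1 inc b) + H0 inc (F0 inc b)) by abel,
      ha, hb]
  · intro c a _ ha
    rw [H1_smulk, F1_smulk, F0_smulk, H0_smulk, ← smul_add, ha]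

/-- The contracting homotopy identity on `P2`. -/
lemma homotopy2 {x : Fin i × Fin j → A} (hx : x ∈ P2 inc) :
    H1 inc (F1 inc x) = x := by
  have hx' := memP2_span inc hx
  refine Submodule.span_induction ?_ ?_ ?_ ?_ hx'
  · rintro g ⟨pq, rfl⟩
    exact H1_F1_single inc pq.1 pq.2
  · rw [F1_zero, H1_zero]
  · intro a b _ _ ha hb
    rw [F1_add, H1_add, ha, hb]
  · intro c a _ ha
    rw [F1_smulk, H1_smulk, ha]

set_option synthInstance.maxHeartbeats 1000000 in
set_option maxHeartbeats 1000000 in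
/-- Criterion for internality of a grading in terms of a finite family of projections. -/
lemma isInternal_of_projections {M : Type} [AddCommGroup M] (g : ℕ → AddSubgroup M)
    (D : Finset ℕ) (π : ℕ → M →+ M)
    (h1 : ∀ d x, π d x ∈ g d)
    (h2 : ∀ x, ∑ d ∈ D, π d x = x)
    (h3 : ∀ d, ∀ x ∈ g d, π d x = x)
    (h4 : ∀ d d', d ≠ d' → ∀ x ∈ g d', π d x = 0) :
    DirectSum.IsInternal g := by
  have key : ∀ (y : ⨁ d, ↥(g d)) (d0 : ℕ),
      π d0 (DirectSum.coeAddMonoidHom g y) = ((y d0 : M)) := by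
    intro y
    induction y using DirectSum.induction_on with
    | zero => intro d0; simp
    | of d m =>
      intro d0
      rw [DirectSum.coeAddMonoidHom_of]
      by_cases h : d0 = d
      · subst h
        rw [DirectSum.of_eq_same]
        exact h3 d0 m m.2
      · rw [DirectSum.of_eq_of_ne _ _ _ h]
        exact (h4 d0 d h m m.2).trans (by simp)
    | add a b ha hb =>
      intro d0
      rw [map_add, map_add, ha d0, hb d0, DirectSum.add_apply]
      simp
  constructor
  · rw [injective_iff_map_eq_zero]
    intro y hy
    refine DFinsupp.ext fun d0 => ?_
    have := key y d0
    rw [hy, map_zero] at this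
    simpa using this.symm
  · intro x
    refine ⟨∑ d ∈ D, DirectSum.of (fun d => ↥(g d)) d ⟨π d x, h1 d x⟩, ?_⟩
    rw [map_sum]
    simp only [DirectSum.coeAddMonoidHom_of]
    exact h2 x

variable (ρ : HD i j → HD i j → ℕ)

def piA (d : ℕ) : A →ₗ[k] A :=
  (bA inc).constr k (fun p => if ρ p.1.1 p.1.2 = d then inc.e p.1.1 p.1.2 else 0)

variable {ρ}

lemma piA_e {z w : HD i j} (h : z ≤ w) (d : ℕ) :
    piA inc ρ d (inc.e z w) = if ρ z w = d then inc.e z w else 0 := by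
  have hb : inc.e z w = bA inc ⟨(z, w), h⟩ := (bA_apply inc ⟨(z, w), h⟩).symm
  rw [piA, hb, Module.Basis.constr_basis]
  simp

variable (GA : GRing (HD i j → k) A)

lemma mem_deg_iff (hGA : IncGrading inc ρ GA) {x : A} {d : ℕ} :
    x ∈ GA.deg d ↔
      x ∈ Submodule.span k {a : A | ∃ z w : HD i j, z ≤ w ∧ ρ z w = d ∧ a = inc.e z w} := by
  have := hGA.deg_eq d
  constructor
  · intro hx
    have : x ∈ (GA.deg d : Set A) := hx
    rwa [hGA.deg_eq d] at this
  · intro hx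
    have : x ∈ ((Submodule.span k {a : A | ∃ z w : HD i j, z ≤ w ∧ ρ z w = d ∧ a = inc.e z w} :
      Submodule k A) : Set A) := hx
    rwa [← hGA.deg_eq d] at this

lemma e_mem_deg (hGA : IncGrading inc ρ GA) {z w : HD i j} (h : z ≤ w) :
    inc.e z w ∈ GA.deg (ρ z w) :=
  (mem_deg_iff inc GA hGA).mpr (Submodule.subset_span ⟨z, w, h, rfl, rfl⟩)

variable {GA}

lemma piA_sum (hρ : LengthFn ρ) (x : A) :
    ∑ d ∈ Finset.range 3, piA inc ρ d x = x := by
  have : (∑ d ∈ Finset.range 3, piA inc ρ d) = LinearMap.id (R := k) (M := A) := by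
    apply Module.Basis.ext (bA inc)
    intro p
    have hp : (p.1.1 : HD i j) ≤ p.1.2 := p.2
    rw [LinearMap.sum_apply, LinearMap.id_apply, bA_apply,
      Finset.sum_congr rfl (fun d _ => piA_e inc hp d),
      Finset.sum_ite_eq (Finset.range 3) (ρ p.1.1 p.1.2) (fun _ => inc.e p.1.1 p.1.2),
      if_pos (Finset.mem_range.mpr (Nat.lt_succ_of_le (rho_le_two hρ hp)))]
  calc ∑ d ∈ Finset.range 3, piA inc ρ d x
      = (∑ d ∈ Finset.range 3, piA inc ρ d) x := by rw [LinearMap.sum_apply]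
    _ = x := by rw [this, LinearMap.id_apply]

lemma piA_mem (hGA : IncGrading inc ρ GA) (d : ℕ) (x : A) : piA inc ρ d x ∈ GA.deg d := by
  rw [mem_deg_iff inc GA hGA]
  rw [repr_expand inc x, map_sum]
  apply Submodule.sum_mem
  intro p _
  rw [map_smul]
  apply Submodule.smul_mem
  rw [bA_apply, piA_e inc p.2]
  by_cases h : ρ p.1.1 p.1.2 = d
  · rw [if_pos h]
    exact Submodule.subset_span ⟨p.1.1, p.1.2, p.2, h, rfl⟩
  · rw [if_neg h]
    exact Submodule.zero_mem _

lemma piA_eq_self (hGA : IncGrading inc ρ GA) {d : ℕ} {x : A} (hx : x ∈ GA.deg d) :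
    piA inc ρ d x = x := by
  rw [mem_deg_iff inc GA hGA] at hx
  refine Submodule.span_induction ?_ ?_ ?_ ?_ hx
  · rintro a ⟨z, w, hzw, hd, rfl⟩
    rw [piA_e inc hzw, if_pos hd]
  · rw [map_zero]
  · intro a b _ _ ha hb
    rw [map_add, ha, hb]
  · intro c a _ ha
    rw [map_smul, ha]

lemma piA_eq_zero (hGA : IncGrading inc ρ GA) {d d' : ℕ} (hne : d ≠ d') {x : A}
    (hx : x ∈ GA.deg d') : piA inc ρ d x = 0 := by
  rw [mem_deg_iff inc GA hGA] at hx
  refine Submodule.span_induction ?_ ?_ ?_ ?_ hx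
  · rintro a ⟨z, w, hzw, hd, rfl⟩
    rw [piA_e inc hzw, if_neg (by omega)]
  · rw [map_zero]
  · intro a b _ _ ha hb
    rw [map_add, ha, hb, add_zero]
  · intro c a _ ha
    rw [map_smul, ha, smul_zero]

lemma piA_mulRight (d : ℕ) (w : HD i j) (b : A) :
    piA inc ρ d (b * inc.e w w) = piA inc ρ d b * inc.e w w := by
  have : (piA inc ρ d).comp (LinearMap.mulRight k (inc.e w w)) =
      (LinearMap.mulRight k (inc.e w w)).comp (piA inc ρ d) := by
    apply Module.Basis.ext (bA inc)
    intro p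
    simp only [LinearMap.comp_apply, LinearMap.mulRight_apply, bA_apply]
    rw [inc.e_mul _ _ _ _ p.2 le_rfl, piA_e inc p.2]
    by_cases h : p.1.2 = w
    · subst h
      rw [if_pos rfl]
      have h2 : (p.1.1 : HD i j) ≤ p.1.2 := p.2
      rw [piA_e inc h2]
      by_cases hd : ρ p.1.1 p.1.2 = d
      · rw [if_pos hd]; exact (e_comp inc h2 le_rfl).symm
      · rw [if_neg hd]; exact (zero_mul _).symm
    · rw [if_neg h, map_zero]
      by_cases hd : ρ p.1.1 p.1.2 = d
      · rw [if_pos hd, inc.e_mul _ _ _ _ p.2 le_rfl, if_neg h]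
      · rw [if_neg hd, zero_mul]
  have := congrArg (fun (L : A →ₗ[k] A) => L b) this
  simpa using this

lemma aug_e_diag (hGA : IncGrading inc ρ GA) (z : HD i j) :
    GA.aug (inc.e z z) = Pi.single z (1 : k) := by
  rw [hGA.aug_eq z z le_rfl, if_pos rfl]

lemma aug_e_ne (hGA : IncGrading inc ρ GA) {z w : HD i j} (h : z ≤ w) (hne : z ≠ w) :
    GA.aug (inc.e z w) = 0 := by
  rw [hGA.aug_eq z w h, if_neg hne]

lemma aug_smul_diag (hρ : LengthFn ρ) (hGA : IncGrading inc ρ GA) (c : k) (z : HD i j) :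
    GA.aug (c • inc.e z z) = Pi.single z c := by
  have hmem : c • inc.e z z ∈ GA.deg 0 := by
    rw [mem_deg_iff inc GA hGA]
    exact Submodule.smul_mem _ c (Submodule.subset_span ⟨z, z, le_rfl, rho_refl hρ z, rfl⟩)
  obtain ⟨r, hr⟩ := GA.emb_surj _ hmem
  rw [← hr, GA.aug_emb]
  have heq : (∑ x : HD i j, r x • inc.e x x) = c • inc.e z z := (hGA.emb_eq r).symm.trans hr
  funext w
  have hco := congrArg (co inc ⟨(w, w), le_rfl⟩) heq
  rw [map_sum, map_smul, co_e_mk inc le_rfl le_rfl] at hco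
  rw [Finset.sum_eq_single w (fun x _ hx => by
      rw [map_smul, co_e_mk inc le_rfl le_rfl, if_neg (by simp [hx]), smul_zero])
    (fun h => absurd (Finset.mem_univ w) h)] at hco
  rw [map_smul, co_e_mk inc le_rfl le_rfl, if_pos ⟨rfl, rfl⟩, smul_eq_mul, mul_one] at hco
  rw [hco]
  by_cases hzw : z = w
  · subst hzw; simp
  · rw [if_neg (by simp [hzw]), Pi.single_eq_of_ne (Ne.symm hzw), smul_zero]

lemma diag_repr (hρ : LengthFn ρ) (hGA : IncGrading inc ρ GA) {x : A} (hx : x ∈ GA.deg 0) :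
    x = ∑ z : HD i j, GA.aug x z • inc.e z z := by
  rw [mem_deg_iff inc GA hGA] at hx
  refine Submodule.span_induction ?_ ?_ ?_ ?_ hx
  · rintro a ⟨z, w, hzw, h0, rfl⟩
    rcases rho_zero_eq hρ hzw h0
    rw [Finset.sum_congr rfl (fun w' _ => by rw [aug_e_diag inc hGA z]),
      Finset.sum_eq_single z (fun w' _ hw' => by
        rw [Pi.single_eq_of_ne hw', zero_smul])
      (fun h => absurd (Finset.mem_univ z) h),
      Pi.single_eq_same, one_smul]
  · rw [map_zero]
    simp
  · intro a b _ _ ha hb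
    rw [map_add]
    conv_lhs => rw [ha, hb]
    rw [← Finset.sum_add_distrib]
    exact Finset.sum_congr rfl (fun z _ => by rw [Pi.add_apply, add_smul])
  · intro c a _ ha
    have key : c • a = ∑ z : HD i j, (c * GA.aug a z) • inc.e z z := by
      conv_lhs => rw [ha]
      rw [Finset.smul_sum]
      exact Finset.sum_congr rfl (fun z _ => by rw [smul_smul])
    have haug : ∀ w, GA.aug (c • a) w = c * GA.aug a w := by
      intro w
      conv_lhs => rw [key]
      rw [map_sum,
        Finset.sum_congr rfl (fun z _ => by rw [aug_smul_diag inc hρ hGA]),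
        Finset.sum_apply,
        Finset.sum_eq_single w (fun z _ hz =>
            Pi.single_eq_of_ne (M := fun _ : HD i j => k) (Ne.symm hz) _)
          (fun h => absurd (Finset.mem_univ w) h),
        Pi.single_eq_same]
    rw [Finset.sum_congr rfl (fun z _ => by rw [haug z]), ← key]

lemma single_mem_P1 (e₀ : Eg i j) {a : A} (ha : a * inc.e (src e₀) (src e₀) = a) :
    Pi.single e₀ a ∈ P1 inc := by
  intro e
  by_cases h : e = e₀
  · subst h; rw [Pi.single_eq_same]; exact ha
  · rw [Pi.single_eq_of_ne h, zero_mul]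

lemma strict_e_in_range {z w : HD i j} (hzw : z ≤ w) (hne : z ≠ w) :
    ∃ y ∈ P1 inc, F0 inc y = inc.e z w := by
  cases z with
  | s p =>
    cases w with
    | s p' => rcases s_le_s hzw; exact absurd rfl hne
    | u =>
      refine ⟨Pi.single (Sum.inl (Sum.inl p)) (inc.e (HD.s p) (HD.s p)),
        single_mem_P1 inc _ (e_idem inc _), ?_⟩
      rw [F0_single]
      exact e_comp inc le_rfl (le_su p)
    | v =>
      refine ⟨Pi.single (Sum.inl (Sum.inr p)) (inc.e (HD.s p) (HD.s p)),
        single_mem_P1 inc _ (e_idem inc _), ?_⟩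
      rw [F0_single]
      exact e_comp inc le_rfl (le_sv p)
    | t q =>
      refine ⟨Pi.single (Sum.inr (Sum.inl q)) (inc.e (HD.s p) HD.u),
        single_mem_P1 inc _ (e_comp inc (le_su p) le_rfl), ?_⟩
      rw [F0_single]
      exact e_comp inc (le_su p) (le_ut q)
  | u =>
    rcases le_of_u_le hzw with rfl | ⟨q, rfl⟩
    · exact absurd rfl hne
    · refine ⟨Pi.single (Sum.inr (Sum.inl q)) (inc.e HD.u HD.u),
        single_mem_P1 inc _ (e_idem inc _), ?_⟩
      rw [F0_single]
      exact e_comp inc le_rfl (le_ut q)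
  | v =>
    rcases le_of_v_le hzw with rfl | ⟨q, rfl⟩
    · exact absurd rfl hne
    · refine ⟨Pi.single (Sum.inr (Sum.inr q)) (inc.e HD.v HD.v),
        single_mem_P1 inc _ (e_idem inc _), ?_⟩
      rw [F0_single]
      exact e_comp inc le_rfl (le_vt q)
  | t q =>
    cases w with
    | t q' => rcases t_le_t hzw; exact absurd rfl hne
    | s p' => exact absurd hzw (by rw [hd_le_iff]; simp [HD.le])
    | u => exact absurd hzw (by rw [hd_le_iff]; simp [HD.le])
    | v => exact absurd hzw (by rw [hd_le_iff]; simp [HD.le])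

lemma span_strict_in_range (hρ : LengthFn ρ) {d : ℕ} (hd : d ≠ 0) {x : A}
    (hx : x ∈ Submodule.span k {a : A | ∃ z w : HD i j, z ≤ w ∧ ρ z w = d ∧ a = inc.e z w}) :
    ∃ y ∈ P1 inc, F0 inc y = x := by
  refine Submodule.span_induction ?_ ?_ ?_ ?_ hx
  · rintro a ⟨z, w, hzw, hrho, rfl⟩
    have hne : z ≠ w := by
      intro h
      subst h
      exact hd (hrho ▸ rho_refl hρ z)
    exact strict_e_in_range inc hzw hne
  · exact ⟨0, Submodule.zero_mem _, F0_zero inc⟩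
  · rintro a b _ _ ⟨y1, hy1, hf1⟩ ⟨y2, hy2, hf2⟩
    exact ⟨y1 + y2, Submodule.add_mem _ hy1 hy2, by rw [F0_add, hf1, hf2]⟩
  · rintro c a _ ⟨y, hy, hf⟩
    refine ⟨c • y, Submodule.smul_of_tower_mem _ c hy, by rw [F0_smulk, hf]⟩

lemma exact0_aux (hρ : LengthFn ρ) (hGA : IncGrading inc ρ GA) {b : A}
    (hb : GA.aug b = 0) : ∃ y ∈ P1 inc, F0 inc y = b := by
  have hsum := piA_sum inc hρ b
  rw [Finset.sum_range_succ, Finset.sum_range_succ, Finset.sum_range_one] at hsum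
  have h1 : GA.aug (piA inc ρ 1 b) = 0 := GA.aug_deg 0 _ (piA_mem inc hGA 1 b)
  have h2 : GA.aug (piA inc ρ 2 b) = 0 := GA.aug_deg 1 _ (piA_mem inc hGA 2 b)
  have h0 : GA.aug (piA inc ρ 0 b) = 0 := by
    have := congrArg GA.aug hsum
    rw [map_add, map_add, h1, h2, add_zero, add_zero, hb] at this
    exact this
  have hz : piA inc ρ 0 b = 0 := by
    rw [diag_repr inc hρ hGA (piA_mem inc hGA 0 b), h0]
    simp
  rw [hz, zero_add] at hsum
  obtain ⟨y1, hy1, hf1⟩ := span_strict_in_range inc hρ (d := 1) one_ne_zero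
    ((mem_deg_iff inc GA hGA).mp (piA_mem inc hGA 1 b))
  obtain ⟨y2, hy2, hf2⟩ := span_strict_in_range inc hρ (d := 2) two_ne_zero
    ((mem_deg_iff inc GA hGA).mp (piA_mem inc hGA 2 b))
  exact ⟨y1 + y2, Submodule.add_mem _ hy1 hy2, by rw [F0_add, hf1, hf2, hsum]⟩

lemma mem_P1_iff {x : Eg i j → A} :
    x ∈ P1 inc ↔ ∀ e, x e * inc.e (src e) (src e) = x e := Iff.rfl

lemma mem_P2_iff {x : Fin i × Fin j → A} :
    x ∈ P2 inc ↔ ∀ pq, x pq * inc.e (HD.s pq.1) (HD.s pq.1) = x pq := Iff.rfl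

def dg1 (G : GRing (HD i j → k) A) : ℕ → AddSubgroup A := fun d =>
  match d with
  | 0 => ⊥
  | d + 1 => G.deg d

def dg2 (G : GRing (HD i j → k) A) : ℕ → AddSubgroup A := fun d =>
  match d with
  | 0 => ⊥
  | 1 => ⊥
  | d + 2 => G.deg d

def g1 (G : GRing (HD i j → k) A) (d : ℕ) : AddSubgroup ↥(P1 inc) :=
  AddSubgroup.comap ((P1 inc).subtype.toAddMonoidHom)
    (AddSubgroup.pi Set.univ (fun _ : Eg i j => dg1 G d))

def g2 (G : GRing (HD i j → k) A) (d : ℕ) : AddSubgroup ↥(P2 inc) :=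
  AddSubgroup.comap ((P2 inc).subtype.toAddMonoidHom)
    (AddSubgroup.pi Set.univ (fun _ : Fin i × Fin j => dg2 G d))

lemma mem_g1 {G : GRing (HD i j → k) A} {d : ℕ} {x : ↥(P1 inc)} :
    x ∈ g1 inc G d ↔ ∀ e, (x : Eg i j → A) e ∈ dg1 G d := by
  simp [g1, AddSubgroup.mem_comap, AddSubgroup.mem_pi]

lemma mem_g2 {G : GRing (HD i j → k) A} {d : ℕ} {x : ↥(P2 inc)} :
    x ∈ g2 inc G d ↔ ∀ pq, (x : Fin i × Fin j → A) pq ∈ dg2 G d := by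
  simp [g2, AddSubgroup.mem_comap, AddSubgroup.mem_pi]

variable (ρ) in
def pi1 (d : ℕ) : ↥(P1 inc) →+ ↥(P1 inc) :=
  match d with
  | 0 => 0
  | d + 1 =>
    AddMonoidHom.mk'
      (fun x => ⟨fun e => piA inc ρ d ((x : Eg i j → A) e),
        (mem_P1_iff inc).mpr (fun e => by rw [← piA_mulRight inc d (src e), x.2 e])⟩)
      (fun a b => Subtype.ext (funext (fun e => by
        show piA inc ρ d (((a + b : P1 inc) : Eg i j → A) e) =
          piA inc ρ d ((a : Eg i j → A) e) + piA inc ρ d ((b : Eg i j → A) e)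
        rw [Submodule.coe_add, Pi.add_apply]
        exact map_add _ _ _)))

variable (ρ) in
def pi2 (d : ℕ) : ↥(P2 inc) →+ ↥(P2 inc) :=
  match d with
  | 0 => 0
  | 1 => 0
  | d + 2 =>
    AddMonoidHom.mk'
      (fun x => ⟨fun pq => piA inc ρ d ((x : Fin i × Fin j → A) pq),
        (mem_P2_iff inc).mpr (fun pq => by
          rw [← piA_mulRight inc d (HD.s pq.1), x.2 pq])⟩)
      (fun a b => Subtype.ext (funext (fun pq => by
        show piA inc ρ d (((a + b : P2 inc) : Fin i × Fin j → A) pq) =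
          piA inc ρ d ((a : Fin i × Fin j → A) pq) + piA inc ρ d ((b : Fin i × Fin j → A) pq)
        rw [Submodule.coe_add, Pi.add_apply]
        exact map_add _ _ _)))

lemma zero_mem_dg1 (G : GRing (HD i j → k) A) (d : ℕ) : (0 : A) ∈ dg1 G d := zero_mem _

lemma pi1_mem (hGA : IncGrading inc ρ GA) (d : ℕ) (x : ↥(P1 inc)) :
    pi1 inc ρ d x ∈ g1 inc GA d := by
  rw [mem_g1]
  match d with
  | 0 => intro e; exact zero_mem _
  | d + 1 => intro e; exact piA_mem inc hGA d _

lemma pi2_mem (hGA : IncGrading inc ρ GA) (d : ℕ) (x : ↥(P2 inc)) :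
    pi2 inc ρ d x ∈ g2 inc GA d := by
  rw [mem_g2]
  match d with
  | 0 => intro pq; exact zero_mem _
  | 1 => intro pq; exact zero_mem _
  | d + 2 => intro pq; exact piA_mem inc hGA d _

lemma pi1_sum (hρ : LengthFn ρ) (x : ↥(P1 inc)) :
    ∑ d ∈ Finset.range 4, pi1 inc ρ d x = x := by
  apply Subtype.ext
  rw [AddSubmonoidClass.coe_finset_sum]
  funext e
  rw [Finset.sum_apply, Finset.sum_range_succ']
  have h0 : ((pi1 inc ρ 0 x : ↥(P1 inc)) : Eg i j → A) e = 0 := rfl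
  have hs : ∀ d, ((pi1 inc ρ (d + 1) x : ↥(P1 inc)) : Eg i j → A) e
      = piA inc ρ d ((x : Eg i j → A) e) := fun d => rfl
  rw [h0, add_zero, Finset.sum_congr rfl (fun d _ => hs d)]
  exact piA_sum inc hρ _

lemma pi2_sum (hρ : LengthFn ρ) (x : ↥(P2 inc)) :
    ∑ d ∈ Finset.range 5, pi2 inc ρ d x = x := by
  apply Subtype.ext
  rw [AddSubmonoidClass.coe_finset_sum]
  funext pq
  rw [Finset.sum_apply, Finset.sum_range_succ', Finset.sum_range_succ']
  have h0 : ((pi2 inc ρ 0 x : ↥(P2 inc)) : Fin i × Fin j → A) pq = 0 := rfl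
  have h1 : ((pi2 inc ρ 1 x : ↥(P2 inc)) : Fin i × Fin j → A) pq = 0 := rfl
  have hs : ∀ d, ((pi2 inc ρ (d + 2) x : ↥(P2 inc)) : Fin i × Fin j → A) pq
      = piA inc ρ d ((x : Fin i × Fin j → A) pq) := fun d => rfl
  rw [h0, h1, add_zero, add_zero, Finset.sum_congr rfl (fun d _ => hs d)]
  exact piA_sum inc hρ _

lemma pi1_eq_self (hGA : IncGrading inc ρ GA) {d : ℕ} {x : ↥(P1 inc)}
    (hx : x ∈ g1 inc GA d) : pi1 inc ρ d x = x := by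
  rw [mem_g1] at hx
  match d with
  | 0 =>
    have : x = 0 := Subtype.ext (funext (fun e => by
      have hb : (x : Eg i j → A) e ∈ (⊥ : AddSubgroup A) := hx e
      rw [AddSubgroup.mem_bot] at hb
      simpa using hb))
    rw [this, map_zero]
  | d + 1 =>
    exact Subtype.ext (funext (fun e => piA_eq_self inc hGA (hx e)))

lemma pi2_eq_self (hGA : IncGrading inc ρ GA) {d : ℕ} {x : ↥(P2 inc)}
    (hx : x ∈ g2 inc GA d) : pi2 inc ρ d x = x := by
  rw [mem_g2] at hx
  match d with
  | 0 =>
    have : x = 0 := Subtype.ext (funext (fun pq => by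
      have hb : (x : Fin i × Fin j → A) pq ∈ (⊥ : AddSubgroup A) := hx pq
      rw [AddSubgroup.mem_bot] at hb
      simpa using hb))
    rw [this, map_zero]
  | 1 =>
    have : x = 0 := Subtype.ext (funext (fun pq => by
      have hb : (x : Fin i × Fin j → A) pq ∈ (⊥ : AddSubgroup A) := hx pq
      rw [AddSubgroup.mem_bot] at hb
      simpa using hb))
    rw [this, map_zero]
  | d + 2 =>
    exact Subtype.ext (funext (fun pq => piA_eq_self inc hGA (hx pq)))

lemma pi1_eq_zero (hGA : IncGrading inc ρ GA) {d d' : ℕ} (hne : d ≠ d') {x : ↥(P1 inc)}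
    (hx : x ∈ g1 inc GA d') : pi1 inc ρ d x = 0 := by
  rw [mem_g1] at hx
  match d with
  | 0 => rfl
  | d + 1 =>
    match d', hx with
    | 0, hx =>
      have : x = 0 := Subtype.ext (funext (fun e => by
        have hb : (x : Eg i j → A) e ∈ (⊥ : AddSubgroup A) := hx e
        rw [AddSubgroup.mem_bot] at hb
        simpa using hb))
      rw [this, map_zero]
    | d' + 1, hx =>
      exact Subtype.ext (funext (fun e =>
        piA_eq_zero inc hGA (by omega) (hx e)))

lemma pi2_eq_zero (hGA : IncGrading inc ρ GA) {d d' : ℕ} (hne : d ≠ d') {x : ↥(P2 inc)}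
    (hx : x ∈ g2 inc GA d') : pi2 inc ρ d x = 0 := by
  rw [mem_g2] at hx
  match d with
  | 0 => rfl
  | 1 => rfl
  | d + 2 =>
    match d', hx with
    | 0, hx =>
      have : x = 0 := Subtype.ext (funext (fun pq => by
        have hb : (x : Fin i × Fin j → A) pq ∈ (⊥ : AddSubgroup A) := hx pq
        rw [AddSubgroup.mem_bot] at hb
        simpa using hb))
      rw [this, map_zero]
    | 1, hx =>
      have : x = 0 := Subtype.ext (funext (fun pq => by
        have hb : (x : Fin i × Fin j → A) pq ∈ (⊥ : AddSubgroup A) := hx pq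
        rw [AddSubgroup.mem_bot] at hb
        simpa using hb))
      rw [this, map_zero]
    | d' + 2, hx =>
      exact Subtype.ext (funext (fun pq =>
        piA_eq_zero inc hGA (by omega) (hx pq)))

lemma internal_g1 (hρ : LengthFn ρ) (hGA : IncGrading inc ρ GA) :
    DirectSum.IsInternal (g1 inc GA) :=
  isInternal_of_projections (g1 inc GA) (Finset.range 4) (pi1 inc ρ)
    (pi1_mem inc hGA) (pi1_sum inc hρ) (fun _ _ hx => pi1_eq_self inc hGA hx)
    (fun _ _ hne _ hx => pi1_eq_zero inc hGA hne hx)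

lemma internal_g2 (hρ : LengthFn ρ) (hGA : IncGrading inc ρ GA) :
    DirectSum.IsInternal (g2 inc GA) :=
  isInternal_of_projections (g2 inc GA) (Finset.range 5) (pi2 inc ρ)
    (pi2_mem inc hGA) (pi2_sum inc hρ) (fun _ _ hx => pi2_eq_self inc hGA hx)
    (fun _ _ hne _ hx => pi2_eq_zero inc hGA hne hx)

lemma trivial_internal (M : Type) [AddCommGroup M] [Subsingleton M] :
    DirectSum.IsInternal (fun _ : ℕ => (⊥ : AddSubgroup M)) := by
  apply isInternal_of_projections _ (∅ : Finset ℕ) (fun _ => 0)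
  · intro d x; exact zero_mem _
  · intro x; rw [Finset.sum_empty]; exact Subsingleton.elim _ _
  · intro d x hx
    rw [AddSubgroup.mem_bot] at hx
    rw [hx, map_zero]
  · intro d d' _ x _; rfl

lemma g1_smul (hGA : IncGrading inc ρ GA) {p d : ℕ} {a : A} {x : ↥(P1 inc)}
    (ha : a ∈ GA.deg p) (hx : x ∈ g1 inc GA d) : a • x ∈ g1 inc GA (p + d) := by
  rw [mem_g1] at hx ⊢
  intro e
  have hcoe : ((a • x : ↥(P1 inc)) : Eg i j → A) e = a * (x : Eg i j → A) e := rfl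
  rw [hcoe]
  match d, hx with
  | 0, hx =>
    have hb : (x : Eg i j → A) e ∈ (⊥ : AddSubgroup A) := hx e
    rw [AddSubgroup.mem_bot] at hb
    rw [hb, mul_zero]
    exact zero_mem _
  | d + 1, hx =>
    exact GA.mul_mem ha (hx e)

lemma g2_smul (hGA : IncGrading inc ρ GA) {p d : ℕ} {a : A} {x : ↥(P2 inc)}
    (ha : a ∈ GA.deg p) (hx : x ∈ g2 inc GA d) : a • x ∈ g2 inc GA (p + d) := by
  rw [mem_g2] at hx ⊢
  intro pq
  have hcoe : ((a • x : ↥(P2 inc)) : Fin i × Fin j → A) pq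
      = a * (x : Fin i × Fin j → A) pq := rfl
  rw [hcoe]
  match d, hx with
  | 0, hx =>
    have hb : (x : Fin i × Fin j → A) pq ∈ (⊥ : AddSubgroup A) := hx pq
    rw [AddSubgroup.mem_bot] at hb
    rw [hb, mul_zero]
    exact zero_mem _
  | 1, hx =>
    have hb : (x : Fin i × Fin j → A) pq ∈ (⊥ : AddSubgroup A) := hx pq
    rw [AddSubgroup.mem_bot] at hb
    rw [hb, mul_zero]
    exact zero_mem _
  | d + 2, hx =>
    exact GA.mul_mem ha (hx pq)

lemma src_ne_tgt (e : Eg i j) : src e ≠ tgt e := by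
  rcases e with (p | p) | (q | q) <;> simp [src, tgt]

lemma rho_edge (hρ : LengthFn ρ) (e : Eg i j) : ρ (src e) (tgt e) = 1 := by
  rcases e with (p | p) | (q | q)
  · exact rho_cov hρ (cov_su p)
  · exact rho_cov hρ (cov_sv p)
  · exact rho_cov hρ (cov_ut q)
  · exact rho_cov hρ (cov_vt q)

lemma F1_mem (g : Fin i × Fin j → A) : F1 inc g ∈ P1 inc := by
  rw [mem_P1_iff]
  intro e
  rcases e with (p | p) | (q | q)
  · exact zero_mul _
  · exact zero_mul _
  · show (∑ p, g (p, q) * inc.e (HD.s p) HD.u) * inc.e HD.u HD.u = _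
    rw [Finset.sum_mul]
    exact Finset.sum_congr rfl (fun p _ => by
      rw [mul_assoc, e_comp inc (le_su p) le_rfl])
  · show (-∑ p, g (p, q) * inc.e (HD.s p) HD.v) * inc.e HD.v HD.v
        = -∑ p, g (p, q) * inc.e (HD.s p) HD.v
    rw [neg_mul, Finset.sum_mul, neg_inj]
    exact Finset.sum_congr rfl (fun p _ => by
      rw [mul_assoc, e_comp inc (le_sv p) le_rfl])

lemma H1_mem (x : Eg i j → A) : H1 inc x ∈ P2 inc := by
  rw [mem_P2_iff]
  intro pq
  show (-(co inc _ _) • inc.e (HD.s pq.1) (HD.s pq.1)) * inc.e (HD.s pq.1) (HD.s pq.1) = _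
  rw [smul_mul_assoc, e_idem]
  rfl

lemma F0_F1 {x : Fin i × Fin j → A} (hx : x ∈ P2 inc) : F0 inc (F1 inc x) = 0 := by
  have hx' := memP2_span inc hx
  refine Submodule.span_induction ?_ ?_ ?_ ?_ hx'
  · rintro g ⟨pq, rfl⟩
    rw [F1_single, e_comp inc le_rfl (le_su pq.1), e_comp inc le_rfl (le_sv pq.1),
      sub_eq_add_neg, show -(Pi.single (Sum.inr (Sum.inr pq.2) : Eg i j)
        (inc.e (HD.s pq.1) HD.v) : Eg i j → A) = (-1 : k) •
        (Pi.single (Sum.inr (Sum.inr pq.2) : Eg i j) (inc.e (HD.s pq.1) HD.v) : Eg i j → A)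
        from (neg_one_smul _ _).symm,
      F0_add, F0_smulk, F0_single, F0_single]
    show inc.e (HD.s pq.1) HD.u * inc.e HD.u (HD.t pq.2)
        + (-1 : k) • (inc.e (HD.s pq.1) HD.v * inc.e HD.v (HD.t pq.2)) = 0
    rw [e_comp inc (le_su pq.1) (le_ut pq.2), e_comp inc (le_sv pq.1) (le_vt pq.2),
      neg_one_smul, add_neg_cancel]
  · rw [F1_zero, F0_zero]
  · intro a b _ _ ha hb
    rw [F1_add, F0_add, ha, hb, add_zero]
  · intro c a _ ha
    rw [F1_smulk, F0_smulk, ha, smul_zero]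

lemma aug_F0 (hGA : IncGrading inc ρ GA) (f : Eg i j → A) : GA.aug (F0 inc f) = 0 := by
  rw [F0, map_sum, Finset.sum_congr rfl (fun e _ => by
    rw [map_mul, aug_e_ne inc hGA (src_le_tgt e) (src_ne_tgt e), mul_zero]),
    Finset.sum_const_zero]

lemma proj_P1 : Module.Projective A ↥(P1 inc) := by
  refine Module.Projective.of_split (M := Eg i j → A) ((P1 inc).subtype)
    { toFun := fun f => ⟨fun e => f e * inc.e (src e) (src e),
        (mem_P1_iff inc).mpr (fun e => by rw [mul_assoc, e_idem])⟩
      map_add' := fun f g => Subtype.ext (funext (fun e => by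
        show (f e + g e) * _ = f e * _ + g e * _
        rw [add_mul]))
      map_smul' := fun a f => Subtype.ext (funext (fun e => by
        show (a * f e) * _ = a * (f e * _)
        rw [mul_assoc])) } ?_
  apply LinearMap.ext
  intro x
  exact Subtype.ext (funext (fun e => x.2 e))

lemma proj_P2 : Module.Projective A ↥(P2 inc) := by
  refine Module.Projective.of_split (M := Fin i × Fin j → A) ((P2 inc).subtype)
    { toFun := fun f => ⟨fun pq => f pq * inc.e (HD.s pq.1) (HD.s pq.1),
        (mem_P2_iff inc).mpr (fun pq => by rw [mul_assoc, e_idem])⟩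
      map_add' := fun f g => Subtype.ext (funext (fun pq => by
        show (f pq + g pq) * _ = f pq * _ + g pq * _
        rw [add_mul]))
      map_smul' := fun a f => Subtype.ext (funext (fun pq => by
        show (a * f pq) * _ = a * (f pq * _)
        rw [mul_assoc])) } ?_
  apply LinearMap.ext
  intro x
  exact Subtype.ext (funext (fun pq => x.2 pq))

lemma proj_punit : Module.Projective A PUnit :=
  Module.Projective.of_split (M := A) 0 0
    (LinearMap.ext (fun x => Subsingleton.elim _ _))

def f0hom : ↥(P1 inc) →+ A :=
  AddMonoidHom.mk' (fun x => F0 inc ↑x)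
    (fun a b => by
      show F0 inc ↑(a + b) = F0 inc ↑a + F0 inc ↑b
      have hc : ((a + b : ↥(P1 inc)) : Eg i j → A)
          = (a : Eg i j → A) + (b : Eg i j → A) := rfl
      rw [hc, F0_add])

def f1hom : ↥(P2 inc) →+ ↥(P1 inc) :=
  AddMonoidHom.mk' (fun x => ⟨F1 inc ↑x, F1_mem inc ↑x⟩)
    (fun a b => Subtype.ext (by
      show F1 inc ↑(a + b) = F1 inc ↑a + F1 inc ↑b
      have hc : ((a + b : ↥(P2 inc)) : Fin i × Fin j → A)
          = (a : Fin i × Fin j → A) + (b : Fin i × Fin j → A) := rfl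
      rw [hc, F1_add]))

lemma gen0 (x : A) :
    x ∈ AddSubgroup.closure {z : A | ∃ a : A, ∃ y ∈ GA.deg 0, z = a • y} := by
  have h1 : (1 : A) ∈ GA.deg 0 := by
    have := GA.emb_mem 1
    rwa [map_one] at this
  exact AddSubgroup.subset_closure ⟨x, 1, h1, by rw [smul_eq_mul, mul_one]⟩

lemma gen1 (hρ : LengthFn ρ) (hGA : IncGrading inc ρ GA) (x : ↥(P1 inc)) :
    x ∈ AddSubgroup.closure
      {z : ↥(P1 inc) | ∃ a : A, ∃ y ∈ g1 inc GA 1, z = a • y} := by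
  have hB : ∀ e : Eg i j,
      (⟨Pi.single e (inc.e (src e) (src e)), single_mem_P1 inc e (e_idem inc _)⟩ : ↥(P1 inc))
        ∈ g1 inc GA 1 := by
    intro e
    rw [mem_g1]
    intro e'
    by_cases h : e' = e
    · subst h
      show (Pi.single e' (inc.e (src e') (src e')) : Eg i j → A) e' ∈ GA.deg 0
      rw [Pi.single_eq_same]
      have := e_mem_deg inc GA hGA (le_refl (src e'))
      rwa [rho_refl hρ] at this
    · show (Pi.single e (inc.e (src e) (src e)) : Eg i j → A) e' ∈ dg1 GA 1
      rw [Pi.single_eq_of_ne h]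
      exact zero_mem _
  have hxsum : x = ∑ e : Eg i j, ((x : Eg i j → A) e) •
      (⟨Pi.single e (inc.e (src e) (src e)), single_mem_P1 inc e (e_idem inc _)⟩ :
        ↥(P1 inc)) := by
    apply Subtype.ext
    rw [AddSubmonoidClass.coe_finset_sum]
    funext e'
    rw [Finset.sum_apply, Finset.sum_eq_single e' (fun e _ he => by
        show (x : Eg i j → A) e * (Pi.single e (inc.e (src e) (src e)) : Eg i j → A) e' = 0
        rw [Pi.single_eq_of_ne (Ne.symm he), mul_zero])
      (fun h => absurd (Finset.mem_univ e') h)]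
    show (x : Eg i j → A) e'
        = (x : Eg i j → A) e' * (Pi.single e' (inc.e (src e') (src e')) : Eg i j → A) e'
    rw [Pi.single_eq_same, x.2 e']
  rw [hxsum]
  exact AddSubgroup.sum_mem _ (fun e _ => AddSubgroup.subset_closure ⟨_, _, hB e, rfl⟩)

lemma gen2 (hρ : LengthFn ρ) (hGA : IncGrading inc ρ GA) (x : ↥(P2 inc)) :
    x ∈ AddSubgroup.closure
      {z : ↥(P2 inc) | ∃ a : A, ∃ y ∈ g2 inc GA 2, z = a • y} := by
  have hmem : ∀ pq : Fin i × Fin j,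
      Pi.single pq (inc.e (HD.s pq.1) (HD.s pq.1)) ∈ P2 inc := by
    intro pq
    rw [mem_P2_iff]
    intro pq'
    by_cases h : pq' = pq
    · subst h
      rw [Pi.single_eq_same]
      exact e_idem inc _
    · rw [Pi.single_eq_of_ne h, zero_mul]
  have hB : ∀ pq : Fin i × Fin j,
      (⟨Pi.single pq (inc.e (HD.s pq.1) (HD.s pq.1)), hmem pq⟩ : ↥(P2 inc))
        ∈ g2 inc GA 2 := by
    intro pq
    rw [mem_g2]
    intro pq'
    by_cases h : pq' = pq
    · subst h
      show (Pi.single pq' (inc.e (HD.s pq'.1) (HD.s pq'.1)) : Fin i × Fin j → A) pq'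
        ∈ GA.deg 0
      rw [Pi.single_eq_same]
      have := e_mem_deg inc GA hGA (le_refl (HD.s pq'.1))
      rwa [rho_refl hρ] at this
    · show (Pi.single pq (inc.e (HD.s pq.1) (HD.s pq.1)) : Fin i × Fin j → A) pq'
        ∈ dg2 GA 2
      rw [Pi.single_eq_of_ne h]
      exact zero_mem _
  have hxsum : x = ∑ pq : Fin i × Fin j, ((x : Fin i × Fin j → A) pq) •
      (⟨Pi.single pq (inc.e (HD.s pq.1) (HD.s pq.1)), hmem pq⟩ : ↥(P2 inc)) := by
    apply Subtype.ext
    rw [AddSubmonoidClass.coe_finset_sum]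
    funext pq'
    rw [Finset.sum_apply, Finset.sum_eq_single pq' (fun pq _ hpq => by
        show (x : Fin i × Fin j → A) pq *
          (Pi.single pq (inc.e (HD.s pq.1) (HD.s pq.1)) : Fin i × Fin j → A) pq' = 0
        rw [Pi.single_eq_of_ne (Ne.symm hpq), mul_zero])
      (fun h => absurd (Finset.mem_univ pq') h)]
    show (x : Fin i × Fin j → A) pq' = (x : Fin i × Fin j → A) pq' *
      (Pi.single pq' (inc.e (HD.s pq'.1) (HD.s pq'.1)) : Fin i × Fin j → A) pq'
    rw [Pi.single_eq_same, x.2 pq']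
  rw [hxsum]
  exact AddSubgroup.sum_mem _ (fun pq _ => AddSubgroup.subset_closure ⟨_, _, hB pq, rfl⟩)

lemma f0_graded (hρ : LengthFn ρ) (hGA : IncGrading inc ρ GA) (d : ℕ) (x : ↥(P1 inc))
    (hx : x ∈ g1 inc GA d) : F0 inc ↑x ∈ GA.deg d := by
  rw [mem_g1] at hx
  match d with
  | 0 =>
    have hz : ∀ e, (x : Eg i j → A) e = 0 := by
      intro e
      have hb : (x : Eg i j → A) e ∈ (⊥ : AddSubgroup A) := hx e
      rwa [AddSubgroup.mem_bot] at hb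
    rw [F0, Finset.sum_congr rfl (fun e _ => by rw [hz e, zero_mul]),
      Finset.sum_const_zero]
    exact zero_mem _
  | d + 1 =>
    rw [F0]
    apply AddSubgroup.sum_mem
    intro e _
    have hE : inc.e (src e) (tgt e) ∈ GA.deg 1 := by
      have := e_mem_deg inc GA hGA (src_le_tgt e)
      rwa [rho_edge hρ] at this
    exact GA.mul_mem (hx e) hE

lemma f1_graded (hρ : LengthFn ρ) (hGA : IncGrading inc ρ GA) (d : ℕ) (x : ↥(P2 inc))
    (hx : x ∈ g2 inc GA d) :
    (⟨F1 inc ↑x, F1_mem inc ↑x⟩ : ↥(P1 inc)) ∈ g1 inc GA d := by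
  rw [mem_g2] at hx
  rw [mem_g1]
  intro e
  show F1 inc (x : Fin i × Fin j → A) e ∈ dg1 GA d
  have hzero : ∀ d', (0 : A) ∈ dg1 GA d' := fun d' => zero_mem _
  have hEsu : ∀ p : Fin i, inc.e (HD.s p) HD.u ∈ GA.deg 1 := by
    intro p
    have := e_mem_deg inc GA hGA (le_su p)
    rwa [rho_cov hρ (cov_su p)] at this
  have hEsv : ∀ p : Fin i, inc.e (HD.s p) HD.v ∈ GA.deg 1 := by
    intro p
    have := e_mem_deg inc GA hGA (le_sv p)
    rwa [rho_cov hρ (cov_sv p)] at this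
  rcases e with (p | p) | (q | q)
  · exact hzero d
  · exact hzero d
  · show (∑ p, (x : Fin i × Fin j → A) (p, q) * inc.e (HD.s p) HD.u) ∈ dg1 GA d
    match d with
    | 0 =>
      have hsz : ∀ y : HD i j, (∑ p : Fin i, (x : Fin i × Fin j → A) (p, q) * inc.e (HD.s p) y)
          = 0 := by
        intro y
        apply Finset.sum_eq_zero
        intro p _
        have hb : (x : Fin i × Fin j → A) (p, q) ∈ (⊥ : AddSubgroup A) := hx (p, q)
        rw [AddSubgroup.mem_bot] at hb
        rw [hb, zero_mul]
      rw [hsz]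
      exact zero_mem _
    | 1 =>
      have hsz : ∀ y : HD i j, (∑ p : Fin i, (x : Fin i × Fin j → A) (p, q) * inc.e (HD.s p) y)
          = 0 := by
        intro y
        apply Finset.sum_eq_zero
        intro p _
        have hb : (x : Fin i × Fin j → A) (p, q) ∈ (⊥ : AddSubgroup A) := hx (p, q)
        rw [AddSubgroup.mem_bot] at hb
        rw [hb, zero_mul]
      rw [hsz]
      exact zero_mem _
    | d + 2 =>
      apply AddSubgroup.sum_mem
      intro p _
      exact GA.mul_mem (hx (p, q)) (hEsu p)
  · show (-∑ p, (x : Fin i × Fin j → A) (p, q) * inc.e (HD.s p) HD.v) ∈ dg1 GA d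
    apply neg_mem
    match d with
    | 0 =>
      have hsz : ∀ y : HD i j, (∑ p : Fin i, (x : Fin i × Fin j → A) (p, q) * inc.e (HD.s p) y)
          = 0 := by
        intro y
        apply Finset.sum_eq_zero
        intro p _
        have hb : (x : Fin i × Fin j → A) (p, q) ∈ (⊥ : AddSubgroup A) := hx (p, q)
        rw [AddSubgroup.mem_bot] at hb
        rw [hb, zero_mul]
      rw [hsz]
      exact zero_mem _
    | 1 =>
      have hsz : ∀ y : HD i j, (∑ p : Fin i, (x : Fin i × Fin j → A) (p, q) * inc.e (HD.s p) y)
          = 0 := by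
        intro y
        apply Finset.sum_eq_zero
        intro p _
        have hb : (x : Fin i × Fin j → A) (p, q) ∈ (⊥ : AddSubgroup A) := hx (p, q)
        rw [AddSubgroup.mem_bot] at hb
        rw [hb, zero_mul]
      rw [hsz]
      exact zero_mem _
    | d + 2 =>
      apply AddSubgroup.sum_mem
      intro p _
      exact GA.mul_mem (hx (p, q)) (hEsv p)

end Alg


/-- Let `k` be a field of characteristic zero and `i, j ≥ 1`.
The incidence ring of the nested horizontal diamonds poset
`P_{i,j} = {s_1, …, s_i, u, v, t_1, …, t_j}` is a Koszul `R`-ring. -/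
theorem horizontal_diamonds_koszul
    (k : Type) [Field k] [CharZero k] (i j : ℕ) (hi : 1 ≤ i) (hj : 1 ≤ j)
    (ρ : HD i j → HD i j → ℕ) (hρ : LengthFn ρ)
    (A : Type) [Ring A] [Algebra k A] (inc : IncAlg k (HD i j) A)
    (GA : GRing (HD i j → k) A) (hGA : IncGrading inc ρ GA) :
    GA.IsKoszul := by
  refine ⟨{
    P := fun n => match n with
      | 0 => A
      | 1 => ↥(P1 inc)
      | 2 => ↥(P2 inc)
      | _ + 3 => PUnit
    acg := fun n => match n with
      | 0 => inferInstance
      | 1 => inferInstance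
      | 2 => inferInstance
      | _ + 3 => inferInstance
    mod := fun n => match n with
      | 0 => inferInstance
      | 1 => inferInstance
      | 2 => inferInstance
      | _ + 3 => inferInstance
    proj := fun n => match n with
      | 0 => inferInstance
      | 1 => proj_P1 inc
      | 2 => proj_P2 inc
      | _ + 3 => proj_punit
    g := fun n => match n with
      | 0 => GA.deg
      | 1 => g1 inc GA
      | 2 => g2 inc GA
      | _ + 3 => fun _ => ⊥
    internal := fun n => match n with
      | 0 => GA.internal
      | 1 => internal_g1 inc hρ hGA
      | 2 => internal_g2 inc hρ hGA
      | _ + 3 => trivial_internal PUnit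
    smul_mem := ?_
    f := fun n => match n with
      | 0 => f0hom inc
      | 1 => f1hom inc
      | 2 => 0
      | _ + 3 => 0
    f_linear := ?_
    f_graded := ?_
    eps := GA.aug.toAddMonoidHom
    eps_linear := ?_
    eps_surj := fun r => ⟨GA.emb r, GA.aug_emb r⟩
    eps_graded := fun d x hx => GA.aug_deg d x hx
    comp0 := fun x => aug_F0 inc hGA ↑x
    exact0 := ?_
    comp := ?_
    exact := ?_
    gen := ?_ }⟩
  -- smul_mem
  · intro n
    rcases n with _ | _ | _ | n
    · intro p d a x ha hx
      show a * x ∈ GA.deg (p + d)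
      exact GA.mul_mem ha hx
    · intro p d a x ha hx
      exact g1_smul inc hGA ha hx
    · intro p d a x ha hx
      exact g2_smul inc hGA ha hx
    · intro p d a x ha hx
      have : a • x = 0 := Subsingleton.elim _ _
      rw [this]
      exact zero_mem _
  -- f_linear
  · intro n
    rcases n with _ | _ | _ | n
    · intro a x
      show F0 inc ↑(a • x) = a • F0 inc ↑x
      have hc : ((a • x : ↥(P1 inc)) : Eg i j → A) = a • (x : Eg i j → A) := rfl
      rw [hc, F0_smul, smul_eq_mul]
    · intro a x
      apply Subtype.ext
      show F1 inc ↑(a • x) = ↑(a • f1hom inc x)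
      have hc : ((a • x : ↥(P2 inc)) : Fin i × Fin j → A)
          = a • (x : Fin i × Fin j → A) := rfl
      rw [hc, F1_smul]
      rfl
    · intro a x
      show (0 : ↥(P2 inc)) = a • (0 : ↥(P2 inc))
      rw [smul_zero]
    · intro a x
      exact Subsingleton.elim _ _
  -- f_graded
  · intro n
    rcases n with _ | _ | _ | n
    · intro d x hx
      exact f0_graded inc hρ hGA d x hx
    · intro d x hx
      exact f1_graded inc hρ hGA d x hx
    · intro d x hx
      exact zero_mem _
    · intro d x hx
      exact zero_mem _
  -- eps_linear
  · intro a x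
    show GA.aug (a • x) = GA.aug a * GA.aug x
    rw [smul_eq_mul, map_mul]
  -- exact0
  · intro x hx
    obtain ⟨y, hy, hf⟩ := exact0_aux inc hρ hGA hx
    exact ⟨⟨y, hy⟩, hf⟩
  -- comp
  · intro n
    rcases n with _ | _ | _ | n
    · intro x
      exact F0_F1 inc x.2
    · intro x
      show f1hom inc 0 = 0
      exact map_zero _
    · intro x
      rfl
    · intro x
      rfl
  -- exact
  · intro n
    rcases n with _ | _ | _ | n
    · intro x hx
      refine ⟨⟨H1 inc ↑x, H1_mem inc ↑x⟩, ?_⟩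
      apply Subtype.ext
      show F1 inc (H1 inc ↑x) = ↑x
      have hht := homotopy1 inc x.2
      have hF0 : F0 inc ↑x = 0 := hx
      rw [hF0, H0_zero, add_zero] at hht
      exact hht
    · intro x hx
      have hF1 : F1 inc ↑x = 0 := by
        have : ((f1hom inc x : ↥(P1 inc)) : Eg i j → A) = F1 inc ↑x := rfl
        rw [← this, hx]
        rfl
      have hx0 : x = 0 := by
        apply Subtype.ext
        have hht := homotopy2 inc x.2
        rw [hF1, H1_zero] at hht
        exact hht.symm
      exact ⟨0, by rw [hx0, map_zero]⟩
    · intro x hx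
      exact ⟨0, Subsingleton.elim _ _⟩
    · intro x hx
      exact ⟨0, Subsingleton.elim _ _⟩
  -- gen
  · intro n
    rcases n with _ | _ | _ | n
    · intro x
      exact gen0 (GA := GA) x
    · intro x
      exact gen1 inc hρ hGA x
    · intro x
      exact gen2 inc hρ hGA x
    · intro x
      have : x = 0 := Subsingleton.elim _ _
      rw [this]
      exact zero_mem _


end P1605
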